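/- In the setting of the abstract Zariski decomposition: let q be a symmetric bilinear form on a rational vector space, D_1,...,D_m with q(D_i,D_j) ≥ 0 for i≠j, D = ∑ a_i D_i with a_i > 0, and M = {(b_1,...,b_m) ∈ [0,a_1]×...×[0,a_m] : q(∑ b_i D_i, D_j) ≥ 0 for all j}. Then M has a unique maximal element with respect to the coordinatewise partial order, and this element has rational coordinates. -/

import Mathlib

lemma rat_solution {ι κ : Type*} [Fintype ι] [Fintype κ] [DecidableEq ι]
    (C : ι → κ → ℚ) (d : κ → ℚ) (x : ι → ℝ)
    (hx : ∀ j, ∑ i, x i * (C i j : ℝ) = (d j : ℝ)) :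
    ∃ y : ι → ℚ, ∀ j, ∑ i, y i * C i j = d j := by
  classical
  set T : (ι → ℚ) →ₗ[ℚ] (κ → ℚ) :=
    { toFun := fun y j => ∑ i, y i * C i j
      map_add' := by intro y z; funext j; simp [add_mul, Finset.sum_add_distrib]
      map_smul' := by intro c y; funext j; simp [Finset.mul_sum, mul_assoc] } with hT
  by_contra h
  push_neg at h
  have hd : d ∉ LinearMap.range T := by
    rintro ⟨y, hy⟩
    obtain ⟨j, hj⟩ := h y
    exact hj (congrFun hy j)
  set W := LinearMap.range T
  have hπ : W.mkQ d ≠ 0 := by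
    simpa [Submodule.Quotient.mk_eq_zero] using hd
  have : ¬ (∀ ψ : Module.Dual ℚ ((κ → ℚ) ⧸ W), ψ (W.mkQ d) = 0) := by
    rw [Module.forall_dual_apply_eq_zero_iff]; exact hπ
  push_neg at this
  obtain ⟨ψ, hψ⟩ := this
  set φ : Module.Dual ℚ (κ → ℚ) := ψ.comp W.mkQ with hφdef
  have hφd : φ d ≠ 0 := hψ
  have hvan : ∀ w ∈ W, φ w = 0 := by
    intro w hw
    have : W.mkQ w = 0 := by simpa [Submodule.Quotient.mk_eq_zero] using hw
    simp [hφdef, LinearMap.comp_apply, this]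
  set w : κ → ℚ := fun j => φ (fun k => if j = k then 1 else 0) with hwdef
  have hφ_eq : ∀ y : κ → ℚ, φ y = ∑ j, y j * w j := by
    intro y
    simpa [smul_eq_mul] using LinearMap.pi_apply_eq_sum_univ φ y
  have key : ∀ i : ι, ∑ j, C i j * w j = 0 := by
    intro i
    have h1 : T (fun i' => if i' = i then 1 else 0) = fun j => C i j := by
      funext j
      simp [hT, Finset.sum_ite_eq' Finset.univ i (fun i' => C i' j)]
    have h2 : φ (fun j => C i j) = 0 := by
      rw [← h1]; exact hvan _ ⟨_, rfl⟩
    rw [hφ_eq] at h2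
    exact h2
  have hR : ((φ d : ℚ) : ℝ) = 0 := by
    rw [hφ_eq]
    push_cast
    calc ∑ j, (d j : ℝ) * (w j : ℝ)
        = ∑ j, (∑ i, x i * (C i j : ℝ)) * (w j : ℝ) := by
          refine Finset.sum_congr rfl fun j _ => ?_; rw [hx j]
      _ = ∑ i, x i * ∑ j, (C i j : ℝ) * (w j : ℝ) := by
          simp_rw [Finset.sum_mul, Finset.mul_sum]
          rw [Finset.sum_comm]
          refine Finset.sum_congr rfl fun i _ => Finset.sum_congr rfl fun j _ => by ring
      _ = 0 := by
          refine Finset.sum_eq_zero fun i _ => ?_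
          have h0 : (∑ j, ((C i j : ℝ) * (w j : ℝ))) = 0 := by
            have := key i
            exact_mod_cast congrArg (fun z : ℚ => (z : ℝ)) this
          rw [h0, mul_zero]
  exact hφd (by exact_mod_cast hR)


lemma pert {m : ℕ} (Q : Fin m → Fin m → ℝ) (a : Fin m → ℝ)
    (b v : Fin m → ℝ)
    (hb : (∀ i, 0 ≤ b i ∧ b i ≤ a i) ∧ ∀ j, 0 ≤ ∑ i, b i * Q i j)
    (h1 : ∀ i, b i = 0 → 0 ≤ v i)
    (h2 : ∀ i, b i = a i → v i ≤ 0)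
    (h3 : ∀ j, (∑ i, b i * Q i j) = 0 → 0 ≤ ∑ i, v i * Q i j) :
    ∃ t : ℝ, 0 < t ∧ ((∀ i, 0 ≤ b i + t * v i ∧ b i + t * v i ≤ a i) ∧
      ∀ j, 0 ≤ ∑ i, (b i + t * v i) * Q i j) := by
  have hexp : ∀ (t : ℝ) j, ∑ i, (b i + t * v i) * Q i j
      = (∑ i, b i * Q i j) + t * ∑ i, v i * Q i j := by
    intro t j
    rw [Finset.mul_sum, ← Finset.sum_add_distrib]
    exact Finset.sum_congr rfl fun i _ => by ring
  have ev1 : ∀ i, ∀ᶠ t in nhdsWithin (0:ℝ) (Set.Ioi 0), 0 ≤ b i + t * v i := by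
    intro i
    rcases (hb.1 i).1.eq_or_lt with h | h
    · filter_upwards [self_mem_nhdsWithin] with t ht
      have : (0:ℝ) ≤ t * v i := mul_nonneg (le_of_lt ht) (h1 i h.symm)
      linarith
    · have hc : Filter.Tendsto (fun t : ℝ => b i + t * v i) (nhds 0) (nhds (b i)) :=
        (continuous_const.add (continuous_id.mul continuous_const)).tendsto' 0 (b i) (by simp)
      exact (hc.eventually (eventually_gt_nhds h)).filter_mono nhdsWithin_le_nhds
        |>.mono fun t ht => le_of_lt ht
  have ev2 : ∀ i, ∀ᶠ t in nhdsWithin (0:ℝ) (Set.Ioi 0), b i + t * v i ≤ a i := by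
    intro i
    rcases (hb.1 i).2.lt_or_eq with h | h
    · have hc : Filter.Tendsto (fun t : ℝ => b i + t * v i) (nhds 0) (nhds (b i)) :=
        (continuous_const.add (continuous_id.mul continuous_const)).tendsto' 0 (b i) (by simp)
      exact (hc.eventually (eventually_lt_nhds h)).filter_mono nhdsWithin_le_nhds
        |>.mono fun t ht => le_of_lt ht
    · filter_upwards [self_mem_nhdsWithin] with t ht
      have : t * v i ≤ 0 := mul_nonpos_of_nonneg_of_nonpos (le_of_lt ht) (h2 i h)
      linarith
  have ev3 : ∀ j, ∀ᶠ t in nhdsWithin (0:ℝ) (Set.Ioi 0),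
      0 ≤ ∑ i, (b i + t * v i) * Q i j := by
    intro j
    rcases (hb.2 j).eq_or_lt with h | h
    · filter_upwards [self_mem_nhdsWithin] with t ht
      rw [hexp t j, ← h]
      have : (0:ℝ) ≤ t * ∑ i, v i * Q i j := mul_nonneg (le_of_lt ht) (h3 j h.symm)
      linarith
    · have hc : Filter.Tendsto (fun t : ℝ => (∑ i, b i * Q i j) + t * ∑ i, v i * Q i j)
          (nhds 0) (nhds (∑ i, b i * Q i j)) :=
        (continuous_const.add (continuous_id.mul continuous_const)).tendsto' 0 _ (by simp)
      have := (hc.eventually (eventually_gt_nhds h)).filter_mono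
        (nhdsWithin_le_nhds (s := Set.Ioi (0:ℝ)))
      filter_upwards [this] with t ht
      rw [hexp t j]
      exact le_of_lt ht
  have hall : ∀ᶠ t in nhdsWithin (0:ℝ) (Set.Ioi 0),
      (0 < t ∧ ((∀ i, 0 ≤ b i + t * v i ∧ b i + t * v i ≤ a i) ∧
        ∀ j, 0 ≤ ∑ i, (b i + t * v i) * Q i j)) := by
    filter_upwards [self_mem_nhdsWithin, (Filter.eventually_all.2 ev1),
      (Filter.eventually_all.2 ev2), (Filter.eventually_all.2 ev3)] with t ht he1 he2 he3
    exact ⟨ht, fun i => ⟨he1 i, he2 i⟩, he3⟩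
  exact hall.exists

theorem stmt_7 {V : Type*} [AddCommGroup V] [Module ℝ V]
    (q : V →ₗ[ℝ] V →ₗ[ℝ] ℝ) (hsymm : ∀ x y, q x y = q y x)
    {m : ℕ} (D : Fin m → V) (hD : ∀ i j, i ≠ j → 0 ≤ q (D i) (D j))
    (hrat : ∀ i j, ∃ r : ℚ, q (D i) (D j) = (r : ℝ))
    (a : Fin m → ℚ) (ha : ∀ i, 0 < a i)
    (M : Set (Fin m → ℝ))
    (hM : M = {b : Fin m → ℝ | (∀ i, b i ∈ Set.Icc (0 : ℝ) ((a i : ℝ))) ∧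
      ∀ j, 0 ≤ q (∑ i, b i • D i) (D j)}) :
    (∃! b : Fin m → ℝ, b ∈ M ∧ ∀ b' ∈ M, b' ≤ b) ∧
    (∀ b : Fin m → ℝ, b ∈ M → (∀ b' ∈ M, b' ≤ b) →
      ∀ i, ∃ r : ℚ, b i = (r : ℝ)) := by
  classical
  obtain ⟨r, hr⟩ : ∃ r : Fin m → Fin m → ℚ, ∀ i j, q (D i) (D j) = (r i j : ℝ) :=
    ⟨fun i j => (hrat i j).choose, fun i j => (hrat i j).choose_spec⟩
  set Q : Fin m → Fin m → ℝ := fun i j => (r i j : ℝ) with hQdef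
  have hq : ∀ (b : Fin m → ℝ) (j : Fin m),
      q (∑ i, b i • D i) (D j) = ∑ i, b i * Q i j := by
    intro b j
    rw [map_sum, LinearMap.sum_apply]
    refine Finset.sum_congr rfl fun i _ => ?_
    rw [map_smul, LinearMap.smul_apply, smul_eq_mul, hr]
  have hQpos : ∀ i j, i ≠ j → 0 ≤ Q i j := fun i j hij => by simp only [hQdef, ← hr i j]; exact hD i j hij
  have hMeq : ∀ b : Fin m → ℝ, b ∈ M ↔
      ((∀ i, 0 ≤ b i ∧ b i ≤ (a i : ℝ)) ∧ ∀ j, 0 ≤ ∑ i, b i * Q i j) := by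
    intro b
    rw [hM]
    simp only [Set.mem_setOf_eq, Set.mem_Icc, hq]
  have hzero : (0 : Fin m → ℝ) ∈ M := by
    rw [hMeq]
    refine ⟨fun i => ⟨le_refl _, ?_⟩, fun j => by simp⟩
    · simp only [Pi.zero_apply]
      exact_mod_cast (ha i).le
  have hclosed : IsClosed M := by
    have hM2 : M = (⋂ i, {b : Fin m → ℝ | 0 ≤ b i ∧ b i ≤ (a i : ℝ)}) ∩
        (⋂ j, {b : Fin m → ℝ | 0 ≤ ∑ i, b i * Q i j}) := by
      ext b
      rw [hMeq b]
      simp [forall_and]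
    rw [hM2]
    refine IsClosed.inter (isClosed_iInter fun i => ?_) (isClosed_iInter fun j => ?_)
    · exact (isClosed_le continuous_const (continuous_apply i)).inter
        (isClosed_le (continuous_apply i) continuous_const)
    · exact isClosed_le continuous_const
        (continuous_finset_sum _ fun i _ => (continuous_apply i).mul continuous_const)
  have hmaxcl : ∀ b ∈ M, ∀ c ∈ M, b ⊔ c ∈ M := by
    intro b hb c hc
    rw [hMeq] at hb hc ⊢
    refine ⟨fun i => ⟨le_trans (hb.1 i).1 le_sup_left, sup_le (hb.1 i).2 (hc.1 i).2⟩, ?_⟩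
    intro j
    rcases le_total (c j) (b j) with hcb | hcb
    · refine le_trans (hb.2 j) (Finset.sum_le_sum fun i _ => ?_)
      rcases eq_or_ne i j with rfl | hij
      · have : b i ⊔ c i = b i := sup_eq_left.2 hcb
        simp [Pi.sup_apply, this]
      · exact mul_le_mul_of_nonneg_right le_sup_left (hQpos i j hij)
    · refine le_trans (hc.2 j) (Finset.sum_le_sum fun i _ => ?_)
      rcases eq_or_ne i j with rfl | hij
      · have : b i ⊔ c i = c i := sup_eq_right.2 hcb
        simp [Pi.sup_apply, this]
      · exact mul_le_mul_of_nonneg_right le_sup_right (hQpos i j hij)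
  set S : Fin m → Set ℝ := fun i => (fun b : Fin m → ℝ => b i) '' M with hSdef
  have hSne : ∀ i, (S i).Nonempty := fun i => ⟨(0 : Fin m → ℝ) i, ⟨0, hzero, rfl⟩⟩
  have hSbdd : ∀ i, BddAbove (S i) := by
    intro i
    refine ⟨(a i : ℝ), ?_⟩
    rintro _ ⟨b, hb, rfl⟩
    exact (((hMeq b).1 hb).1 i).2
  set s : Fin m → ℝ := fun i => sSup (S i) with hsdef
  have hle_s : ∀ b ∈ M, b ≤ s := fun b hb i => le_csSup (hSbdd i) ⟨b, hb, rfl⟩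
  have hsM : s ∈ M := by
    refine hclosed.closure_subset ?_
    rw [Metric.mem_closure_iff]
    intro ε hε
    have key : ∀ t : Finset (Fin m), ∃ c ∈ M, ∀ i ∈ t, s i - ε / 2 < c i := by
      intro t
      induction t using Finset.induction_on with
      | empty => exact ⟨0, hzero, by simp⟩
      | @insert i t _ ih =>
        obtain ⟨c, hcM, hc⟩ := ih
        obtain ⟨x, hx, hxgt⟩ := exists_lt_of_lt_csSup (hSne i)
          (show s i - ε / 2 < sSup (S i) by simp only [hsdef]; linarith)
        obtain ⟨b, hbM, rfl⟩ := hx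
        refine ⟨c ⊔ b, hmaxcl c hcM b hbM, fun i' hi' => ?_⟩
        rcases Finset.mem_insert.1 hi' with rfl | hi't
        · exact lt_of_lt_of_le hxgt (by rw [Pi.sup_apply]; exact le_sup_right)
        · exact lt_of_lt_of_le (hc i' hi't) le_sup_left
    obtain ⟨c, hcM, hc⟩ := key Finset.univ
    refine ⟨c, hcM, ?_⟩
    rw [dist_pi_lt_iff hε]
    intro i
    rw [Real.dist_eq, abs_lt]
    have h1 : c i ≤ s i := hle_s c hcM i
    have h2 : s i - ε / 2 < c i := hc i (Finset.mem_univ i)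
    constructor <;> linarith
  refine ⟨⟨s, ⟨hsM, hle_s⟩, ?_⟩, ?_⟩
  · rintro y ⟨hyM, hymax⟩
    exact le_antisymm (hle_s y hyM) (hymax s hsM)
  · intro b hbM hbmax
    have hbP := (hMeq b).1 hbM
    have hG2 : ∀ v : Fin m → ℝ, (∀ i, b i = 0 → v i = 0) →
        (∀ i, b i = (a i : ℝ) → v i = 0) →
        (∀ j, (∑ i, b i * Q i j) = 0 → ∑ i, v i * Q i j = 0) → v = 0 := by
      intro v hv0 hva hvq
      obtain ⟨t, ht, hmem⟩ := pert Q (fun i => (a i : ℝ)) b v hbP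
        (fun i hi => le_of_eq (hv0 i hi).symm) (fun i hi => le_of_eq (hva i hi))
        (fun j hj => le_of_eq (hvq j hj).symm)
      obtain ⟨t', ht', hmem'⟩ := pert Q (fun i => (a i : ℝ)) b (fun i => - v i) hbP
        (fun i hi => by rw [hv0 i hi, neg_zero])
        (fun i hi => by rw [hva i hi, neg_zero])
        (fun j hj => by
          have hneg : ∑ i, (-v i) * Q i j = -(∑ i, v i * Q i j) := by
            rw [← Finset.sum_neg_distrib]
            exact Finset.sum_congr rfl fun i _ => by ring
          rw [hneg, hvq j hj]; simp)
      have h1 : (fun i => b i + t * v i) ≤ b := hbmax _ ((hMeq _).2 hmem)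
      have h2 : (fun i => b i + t' * (- v i)) ≤ b := hbmax _ ((hMeq _).2 hmem')
      funext i
      have e1 : b i + t * v i ≤ b i := h1 i
      have e2 : b i + t' * (- v i) ≤ b i := h2 i
      simp only [Pi.zero_apply]
      have hv1 : v i ≤ 0 := by nlinarith
      have hv2 : 0 ≤ v i := by nlinarith
      linarith
    set β : Fin m → ℚ := fun i => if b i = 0 then 0 else a i with hβdef
    have hβ : ∀ i, ¬ (0 < b i ∧ b i < (a i : ℝ)) → (β i : ℝ) = b i := by
      intro i hi
      rcases ((hbP.1 i).1).eq_or_lt with h0 | h0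
      · show ((if b i = 0 then (0:ℚ) else a i : ℚ) : ℝ) = b i
        rw [if_pos h0.symm, ← h0]
        simp
      · have hne : b i ≠ 0 := ne_of_gt h0
        have hba : b i = (a i : ℝ) := by
          rcases ((hbP.1 i).2).lt_or_eq with h1 | h1
          · exact absurd ⟨h0, h1⟩ hi
          · exact h1
        show ((if b i = 0 then (0:ℚ) else a i : ℚ) : ℝ) = b i
        rw [if_neg hne]
        exact hba.symm
    set C : Fin m → (Fin m ⊕ Fin m) → ℚ := fun i => Sum.elim
      (fun i' => if (0 < b i' ∧ b i' < (a i' : ℝ)) then 0 else (if i = i' then 1 else 0))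
      (fun j => if (∑ i'', b i'' * Q i'' j) = 0 then r i j else 0) with hCdef
    set d : (Fin m ⊕ Fin m) → ℚ := Sum.elim
      (fun i' => if (0 < b i' ∧ b i' < (a i' : ℝ)) then 0 else β i')
      (fun _ => 0) with hddef
    have hx : ∀ k, ∑ i, b i * ((C i k : ℚ) : ℝ) = ((d k : ℚ) : ℝ) := by
      rintro (i' | j)
      · by_cases hU : (0 < b i' ∧ b i' < (a i' : ℝ))
        · simp [hCdef, hddef, hU]
        · simp only [hCdef, hddef, Sum.elim_inl, if_neg hU]
          push_cast
          have hcastite : ∀ x : Fin m, (((if x = i' then (1:ℚ) else 0) : ℚ) : ℝ)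
              = if x = i' then (1:ℝ) else 0 := fun x => by split <;> simp
          simp only [hcastite, mul_ite, mul_one, mul_zero]
          rw [Finset.sum_ite_eq' Finset.univ i' b]
          simp [hβ i' hU]
      · by_cases hA : (∑ i'', b i'' * Q i'' j) = 0
        · simp only [hCdef, hddef, Sum.elim_inr, if_pos hA]
          push_cast
          exact hA
        · simp [hCdef, hddef, hA]
    obtain ⟨y, hy⟩ := rat_solution C d b hx
    have hvy : ∀ i, ¬ (0 < b i ∧ b i < (a i : ℝ)) → (y i : ℝ) = b i := by
      intro i hi
      have h := hy (Sum.inl i)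
      simp only [hCdef, hddef, Sum.elim_inl, if_neg hi, mul_ite, mul_one, mul_zero] at h
      rw [Finset.sum_ite_eq' Finset.univ i y] at h
      simp only [Finset.mem_univ, if_pos] at h
      rw [h, hβ i hi]
    have hvq : ∀ j, (∑ i, b i * Q i j) = 0 → ∑ i, (y i : ℝ) * Q i j = 0 := by
      intro j hj
      have h := hy (Sum.inr j)
      simp only [hCdef, hddef, Sum.elim_inr, if_pos hj] at h
      calc ∑ i, (y i : ℝ) * Q i j = ((∑ i, y i * r i j : ℚ) : ℝ) := by push_cast; rfl
        _ = 0 := by rw [h]; simp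
    have hveq : (fun i => (y i : ℝ) - b i) = 0 := by
      apply hG2
      · intro i hi
        have hni : ¬ (0 < b i ∧ b i < (a i : ℝ)) := fun h => absurd hi (ne_of_gt h.1)
        rw [hvy i hni]
        simp
      · intro i hi
        have hni : ¬ (0 < b i ∧ b i < (a i : ℝ)) := fun h => absurd hi (ne_of_lt h.2)
        rw [hvy i hni]
        simp
      · intro j hj
        have hsplit : ∑ i, ((y i : ℝ) - b i) * Q i j
            = (∑ i, (y i : ℝ) * Q i j) - ∑ i, b i * Q i j := by
          rw [← Finset.sum_sub_distrib]
          exact Finset.sum_congr rfl fun i _ => by ring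
        rw [hsplit, hvq j hj, hj, sub_zero]
    intro i
    refine ⟨y i, ?_⟩
    have h := congrFun hveq i
    simp only [Pi.zero_apply] at h
    linarith [h]
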